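/- For every nonnegative integer a, the family {E_{a,d}}_{d∈ℤ} is a partition of ℕ, and consequently d ↦ μ_a(d) defines a probability measure on ℤ (the densities sum to 1). -/

import Mathlib

open Filter

/-- Binary sum-of-digits function. -/
def s2 (n : ℕ) : ℕ := (Nat.digits 2 n).sum

/-- The set `E_{a,d} = {n : s₂(n+a) - s₂(n) = d}`. -/
def E (a : ℕ) (d : ℤ) : Set ℕ := {n | (s2 (n + a) : ℤ) - s2 n = d}

/-- `hasDensity a d x` means `E_{a,d}` has asymptotic density `x`. -/
def hasDensity (a : ℕ) (d : ℤ) (x : ℝ) : Prop :=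
  Tendsto (fun N : ℕ =>
      (((Finset.range N).filter (fun n => (s2 (n + a) : ℤ) - s2 n = d)).card : ℝ) / N)
    atTop (nhds x)

lemma s2_split (k q r : ℕ) (hr : r < 2 ^ k) : s2 (r + 2 ^ k * q) = s2 r + s2 q := by
  rcases Nat.eq_zero_or_pos q with rfl | hq
  · simp [s2]
  have hlen : (Nat.digits 2 r).length ≤ k := by
    rcases Nat.eq_zero_or_pos r with rfl | hr0
    · simp
    rw [Nat.digits_len 2 r one_lt_two hr0.ne']
    have := Nat.log_lt_of_lt_pow hr0.ne' hr
    omega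
  have h := Nat.digits_append_zeroes_append_digits (b := 2) (k := k - (Nat.digits 2 r).length)
    (m := q) (n := r) one_lt_two hq
  rw [show (Nat.digits 2 r).length + (k - (Nat.digits 2 r).length) = k from by omega] at h
  unfold s2
  rw [← h]
  simp

lemma s2_le (D x : ℕ) (hx : x < 2 ^ D) : s2 x ≤ D := by
  have h1 : ∀ y ∈ Nat.digits 2 x, y ≤ 1 := fun y hy =>
    Nat.lt_succ_iff.mp (Nat.digits_lt_base one_lt_two hy)
  have := List.sum_le_card_nsmul _ 1 h1
  simp only [smul_eq_mul, mul_one] at this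
  refine le_trans this ?_
  rcases Nat.eq_zero_or_pos x with rfl | hx0
  · simp
  rw [Nat.digits_len 2 x one_lt_two hx0.ne']
  have := Nat.log_lt_of_lt_pow hx0.ne' hx
  omega

lemma key_mem (a D n : ℕ) (ha : a < 2 ^ D) (hn : n % 2 ^ D < 2 ^ D - a) :
    (s2 (n + a) : ℤ) - s2 n ∈ Finset.Icc (-(D : ℤ)) D := by
  set M := 2 ^ D with hM
  have hM0 : 0 < M := Nat.pow_pos (by norm_num)
  have hra : n % M + a < M := by omega
  have h1 : n = n % M + M * (n / M) := (Nat.mod_add_div n M).symm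
  have h2 : n + a = (n % M + a) + M * (n / M) := by omega
  have e1 : s2 n = s2 (n % M) + s2 (n / M) := by
    conv_lhs => rw [h1]
    exact s2_split D (n / M) (n % M) (Nat.mod_lt n hM0)
  have e2 : s2 (n + a) = s2 (n % M + a) + s2 (n / M) := by
    conv_lhs => rw [h2]
    exact s2_split D (n / M) (n % M + a) hra
  have b1 : s2 (n % M) ≤ D := s2_le D _ (Nat.mod_lt n hM0)
  have b2 : s2 (n % M + a) ≤ D := s2_le D _ hra
  simp only [Finset.mem_Icc]
  rw [e1, e2]
  push_cast
  omega

lemma count_bad (M a N : ℕ) (hM : 0 < M) :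
    (((Finset.range N).filter (fun n => ¬ n % M < M - a)).card) ≤ (N / M + 1) * a := by
  classical
  have := Finset.card_le_card_of_injOn
    (f := fun n => (n / M, n % M - (M - a)))
    (s := (Finset.range N).filter (fun n => ¬ n % M < M - a))
    (t := (Finset.range (N / M + 1)) ×ˢ (Finset.range a))
    ?_ ?_
  · simpa [mul_comm] using this
  · intro n hn
    simp only [Finset.mem_coe, Finset.mem_filter, Finset.mem_range, not_lt] at hn
    obtain ⟨hnN, hge⟩ := hn
    have hmod : n % M < M := Nat.mod_lt n hM
    simp only [Finset.mem_coe, Finset.mem_product, Finset.mem_range]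
    constructor
    · have : n / M ≤ N / M := Nat.div_le_div_right hnN.le
      omega
    · omega
  · intro x hx y hy hxy
    rw [Finset.mem_coe, Finset.mem_filter, Finset.mem_range, not_lt] at hx hy
    obtain ⟨hx1, hx2⟩ := hx
    obtain ⟨hy1, hy2⟩ := hy
    have hxm : x % M < M := Nat.mod_lt x hM
    have hym : y % M < M := Nat.mod_lt y hM
    simp only [Prod.mk.injEq] at hxy
    obtain ⟨h1, h2⟩ := hxy
    have h3 : x % M = y % M := by omega
    have e1 := Nat.mod_add_div x M
    have e2 := Nat.mod_add_div y M
    rw [h1, h3] at e1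
    omega

theorem E_partition_and_density_prob (a : ℕ) (μ : ℤ → ℝ)
    (hμ : ∀ d, hasDensity a d (μ d)) :
    (⋃ d : ℤ, E a d) = Set.univ ∧
    (Pairwise fun d d' : ℤ => Disjoint (E a d) (E a d')) ∧
    (∀ d, 0 ≤ μ d) ∧ HasSum μ 1 := by
  classical
  set v : ℕ → ℤ := fun n => (s2 (n + a) : ℤ) - s2 n with hv
  set cnt : ℤ → ℕ → ℕ := fun d N => ((Finset.range N).filter (fun n => v n = d)).card with hcnt
  have hμ' : ∀ d, Tendsto (fun N : ℕ => (cnt d N : ℝ) / N) atTop (nhds (μ d)) := hμ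
  have hnonneg : ∀ d, 0 ≤ μ d := by
    intro d
    refine le_of_tendsto_of_tendsto' tendsto_const_nhds (hμ' d) ?_
    intro N
    positivity
  -- counting identity for any finite set of values
  have hcnt_eq : ∀ (u : Finset ℤ) (N : ℕ),
      ∑ d ∈ u, cnt d N = ((Finset.range N).filter (fun n => v n ∈ u)).card := by
    intro u N
    rw [Finset.card_eq_sum_card_fiberwise (f := v) (t := u)
      (s := (Finset.range N).filter (fun n => v n ∈ u))
      (fun n hn => Finset.mem_coe.mpr (Finset.mem_filter.mp (Finset.mem_coe.mp hn)).2)]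
    refine Finset.sum_congr rfl fun d hd => ?_
    rw [Finset.filter_filter]
    show ((Finset.range N).filter (fun n => v n = d)).card = _
    congr 1
    ext n
    simp only [Finset.mem_filter, Finset.mem_range]
    exact ⟨fun ⟨h1, h2⟩ => ⟨h1, h2 ▸ hd, h2⟩, fun ⟨h1, _, h3⟩ => ⟨h1, h3⟩⟩
  have hsum_le_N : ∀ (u : Finset ℤ) (N : ℕ), ∑ d ∈ u, cnt d N ≤ N := by
    intro u N
    rw [hcnt_eq]
    calc ((Finset.range N).filter (fun n => v n ∈ u)).card
        ≤ (Finset.range N).card := Finset.card_le_card (Finset.filter_subset _ _)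
      _ = N := Finset.card_range N
  -- partial sums of μ over any finite set are ≤ 1
  have hle1 : ∀ u : Finset ℤ, ∑ d ∈ u, μ d ≤ 1 := by
    intro u
    have htend : Tendsto (fun N : ℕ => ∑ d ∈ u, (cnt d N : ℝ) / N) atTop
        (nhds (∑ d ∈ u, μ d)) := tendsto_finset_sum _ fun d _ => hμ' d
    refine le_of_tendsto htend ?_
    filter_upwards [eventually_ge_atTop 1] with N hN
    have hN0 : (0 : ℝ) < N := by exact_mod_cast hN
    rw [← Finset.sum_div]
    rw [div_le_one hN0]
    exact_mod_cast Nat.cast_le.mpr (hsum_le_N u N)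
  -- lower bound for partial sums over Icc
  have hpartial : ∀ D : ℕ, a < 2 ^ D →
      1 - (a : ℝ) / 2 ^ D ≤ ∑ d ∈ Finset.Icc (-(D : ℤ)) D, μ d := by
    intro D haD
    set M := 2 ^ D with hMdefD
    have hM0 : 0 < M := Nat.pow_pos (by norm_num)
    set u : Finset ℤ := Finset.Icc (-(D : ℤ)) D with hu
    have htend : Tendsto (fun N : ℕ => ∑ d ∈ u, (cnt d N : ℝ) / N) atTop
        (nhds (∑ d ∈ u, μ d)) := tendsto_finset_sum _ fun d _ => hμ' d
    have hMcast : ((M : ℕ) : ℝ) = 2 ^ D := by rw [hMdefD]; push_cast; ring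
    rw [← hMcast]
    have htop : Tendsto (fun N : ℕ => 1 - (a : ℝ) / M - a / N) atTop
        (nhds (1 - (a : ℝ) / M - 0)) :=
      tendsto_const_nhds.sub (tendsto_const_div_atTop_nhds_zero_nat (a : ℝ))
    rw [sub_zero] at htop
    refine le_of_tendsto_of_tendsto htop htend ?_
    filter_upwards [eventually_ge_atTop 1] with N hN
    have hN0 : (0 : ℝ) < N := by exact_mod_cast hN
    -- counting : N - bad ≤ ∑ cnt
    have hbad : ((Finset.range N).filter (fun n => v n ∉ u)).card ≤ (N / M + 1) * a := by
      refine le_trans (Finset.card_le_card ?_) (count_bad M a N hM0)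
      intro n hn
      simp only [Finset.mem_filter] at hn ⊢
      refine ⟨hn.1, fun hlt => hn.2 ?_⟩
      exact key_mem a D n haD hlt
    have hsplit : ((Finset.range N).filter (fun n => v n ∈ u)).card
        + ((Finset.range N).filter (fun n => v n ∉ u)).card = N := by
      rw [Finset.card_filter_add_card_filter_not, Finset.card_range]
    have hlowN : (N : ℝ) - ((N / M : ℕ) + 1) * a ≤ ∑ d ∈ u, cnt d N := by
      rw [hcnt_eq]
      have h1 : (N : ℕ) ≤ ((Finset.range N).filter (fun n => v n ∈ u)).card + (N / M + 1) * a := by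
        omega
      have := Nat.cast_le (α := ℝ) |>.mpr h1
      push_cast at this ⊢
      linarith
    have hdivle : ((N / M : ℕ) : ℝ) ≤ (N : ℝ) / M := Nat.cast_div_le
    have hM0' : (0 : ℝ) < M := by exact_mod_cast hM0
    rw [← Finset.sum_div, le_div_iff₀ hN0, ← Nat.cast_sum]
    refine le_trans ?_ hlowN
    have expand : (1 - (a : ℝ) / M - a / N) * N = N - (a / M) * N - a := by
      field_simp
    rw [expand]
    have h2 : ((N / M : ℕ) : ℝ) * a ≤ (N : ℝ) / M * a :=
      mul_le_mul_of_nonneg_right hdivle (by positivity)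
    have h3 : (N : ℝ) / M * a = (a / M) * N := by ring
    nlinarith
  -- conclusion
  have hsummable : Summable μ := summable_of_sum_le (fun d => hnonneg d) hle1
  have htsum_le : ∑' d, μ d ≤ 1 := hsummable.tsum_le_of_sum_le hle1
  have htsum_ge : 1 ≤ ∑' d, μ d := by
    have htend : Tendsto (fun D : ℕ => 1 - (a : ℝ) / 2 ^ D) atTop (nhds (1 - 0)) := by
      refine tendsto_const_nhds.sub ?_
      have h12 : Tendsto (fun D : ℕ => (a : ℝ) * (1 / 2) ^ D) atTop (nhds ((a : ℝ) * 0)) :=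
        (tendsto_pow_atTop_nhds_zero_of_lt_one (by norm_num) (by norm_num)).const_mul _
      rw [mul_zero] at h12
      convert h12 using 2 with D
      rw [one_div, inv_pow, div_eq_mul_inv]
    rw [sub_zero] at htend
    refine le_of_tendsto htend ?_
    filter_upwards [eventually_ge_atTop a] with D hD
    have haD : a < 2 ^ D := lt_of_lt_of_le (Nat.lt_two_pow_self)
      (Nat.pow_le_pow_right (by norm_num) hD)
    refine le_trans (hpartial D haD) ?_
    exact Summable.sum_le_tsum _ (fun d _ => hnonneg d) hsummable
  have htsum : ∑' d, μ d = 1 := le_antisymm htsum_le htsum_ge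
  refine ⟨?_, ?_, hnonneg, ?_⟩
  · ext n
    simp only [Set.mem_iUnion, Set.mem_univ, iff_true]
    exact ⟨(s2 (n + a) : ℤ) - s2 n, rfl⟩
  · intro d d' hdd'
    rw [Set.disjoint_left]
    intro n hn hn'
    exact hdd' (hn ▸ hn')
  · exact htsum ▸ hsummable.hasSum
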